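/- arXiv:2106.01605 — 2 statements merged into one kernel-verified Lean document; each statement's English description precedes it below -/
import Mathlib

section
/- With the bilinear form ⟨u,v⟩ = 2(x_u x_v + y_u y_v − t_u t_v) on symmetric 2×2 real matrices v = [[t+y, x],[x, t−y]] (equivalently ⟨v,v⟩ = −2 det v, polarized), the roots α_m defined by α_{a+2m} = γ^m α_a (γ^T)^m satisfy the linear relation α_m + (N−1) α_{m+2} = (N−1) α_{m+1} + α_{m+3} for all m. -/
private lemma cancelG (N : ℤ) (X : Matrix (Fin 2) (Fin 2) ℤ) :
    !![1 - N, 1; -N, 1] * (!![1, -1; N, 1 - N] * X * (!![1, -1; N, 1 - N]).transpose)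
      * (!![1 - N, 1; -N, 1]).transpose = X := by
  have hA : (!![1 - N, 1; -N, 1] : Matrix (Fin 2) (Fin 2) ℤ) * !![1, -1; N, 1 - N] = 1 := by
    ext i j
    fin_cases i <;> fin_cases j <;>
      simp [Matrix.mul_apply, Fin.sum_univ_two, Matrix.one_apply] <;> ring
  have hB : (!![1, -1; N, 1 - N] : Matrix (Fin 2) (Fin 2) ℤ).transpose
      * (!![1 - N, 1; -N, 1]).transpose = 1 := by
    rw [← Matrix.transpose_mul, hA, Matrix.transpose_one]
  calc !![1 - N, 1; -N, 1] * (!![1, -1; N, 1 - N] * X * (!![1, -1; N, 1 - N]).transpose)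
        * (!![1 - N, 1; -N, 1]).transpose
      = (!![1 - N, 1; -N, 1] * !![1, -1; N, 1 - N]) * (X
        * ((!![1, -1; N, 1 - N] : Matrix (Fin 2) (Fin 2) ℤ).transpose
          * (!![1 - N, 1; -N, 1]).transpose)) := by
        simp only [Matrix.mul_assoc]
    _ = X := by rw [hA, hB, Matrix.one_mul, Matrix.mul_one]

/-- For the family of roots `α : ℤ → Mat₂(ℤ)` with `α 1 = [[2,1],[1,0]]`,
`α 2 = [[0,−1],[−1,0]]` and `α (m+2) = γ (α m) γᵀ` where `γ = [[1,−1],[N,1−N]]`,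
the linear relation `α m + (N−1) α (m+2) = (N−1) α (m+1) + α (m+3)` holds for all `m`. -/
theorem stmt4 (N : ℤ) (hN : 0 < N)
    (α : ℤ → Matrix (Fin 2) (Fin 2) ℤ)
    (h1 : α 1 = !![2, 1; 1, 0]) (h2 : α 2 = !![0, -1; -1, 0])
    (hrec : ∀ m : ℤ,
      α (m + 2) = !![1, -1; N, 1 - N] * α m * (!![1, -1; N, 1 - N]).transpose) :
    ∀ m : ℤ, α m + (N - 1) • α (m + 2) = (N - 1) • α (m + 1) + α (m + 3) := by
  set G : Matrix (Fin 2) (Fin 2) ℤ := !![1, -1; N, 1 - N] with hG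
  -- conjugation identities
  have conj : ∀ m : ℤ,
      α (m + 2) + (N - 1) • α (m + 4)
        = G * (α m + (N - 1) • α (m + 2)) * G.transpose ∧
      (N - 1) • α (m + 3) + α (m + 5)
        = G * ((N - 1) • α (m + 1) + α (m + 3)) * G.transpose := by
    intro m
    have e2 := hrec m
    have e4 : α (m + 4) = G * α (m + 2) * G.transpose := by
      have h := hrec (m + 2); rw [show m + 2 + 2 = m + 4 by ring] at h; exact h
    have e3 : α (m + 3) = G * α (m + 1) * G.transpose := by
      have h := hrec (m + 1); rw [show m + 1 + 2 = m + 3 by ring] at h; exact h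
    have e5 : α (m + 5) = G * α (m + 3) * G.transpose := by
      have h := hrec (m + 3); rw [show m + 3 + 2 = m + 5 by ring] at h; exact h
    constructor
    · symm
      rw [Matrix.mul_add, Matrix.add_mul, Matrix.mul_smul, Matrix.smul_mul, ← e2, ← e4]
    · symm
      rw [Matrix.mul_add, Matrix.add_mul, Matrix.mul_smul, Matrix.smul_mul, ← e3, ← e5]
  have step_up : ∀ m : ℤ,
      (α m + (N - 1) • α (m + 2) = (N - 1) • α (m + 1) + α (m + 3)) →
      (α (m + 2) + (N - 1) • α (m + 4) = (N - 1) • α (m + 3) + α (m + 5)) := by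
    intro m hm
    rw [(conj m).1, (conj m).2, hm]
  have step_down : ∀ m : ℤ,
      (α (m + 2) + (N - 1) • α (m + 4) = (N - 1) • α (m + 3) + α (m + 5)) →
      (α m + (N - 1) • α (m + 2) = (N - 1) • α (m + 1) + α (m + 3)) := by
    intro m hm
    have key : G * (α m + (N - 1) • α (m + 2)) * G.transpose
        = G * ((N - 1) • α (m + 1) + α (m + 3)) * G.transpose := by
      rw [← (conj m).1, ← (conj m).2]; exact hm
    calc α m + (N - 1) • α (m + 2)
        = !![1 - N, 1; -N, 1] * (G * (α m + (N - 1) • α (m + 2)) * G.transpose)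
            * (!![1 - N, 1; -N, 1]).transpose := (cancelG N _).symm
      _ = !![1 - N, 1; -N, 1] * (G * ((N - 1) • α (m + 1) + α (m + 3)) * G.transpose)
            * (!![1 - N, 1; -N, 1]).transpose := by rw [key]
      _ = (N - 1) • α (m + 1) + α (m + 3) := cancelG N _
  -- concrete values of α 3, α 4, α 5
  have e3 : α 3 = !![0, 1; 1, 2 * N] := by
    have h := hrec 1; norm_num [h1] at h; rw [h, hG]
    ext i j
    fin_cases i <;> fin_cases j <;>
      simp [Matrix.mul_apply, Fin.sum_univ_two, Matrix.transpose_apply, Matrix.vecHead, Matrix.vecTail] <;> ring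
  have e4 : α 4 = !![2, 2 * N - 1; 2 * N - 1, 2 * N * (N - 1)] := by
    have h := hrec 2; norm_num [h2] at h; rw [h, hG]
    ext i j
    fin_cases i <;> fin_cases j <;>
      simp [Matrix.mul_apply, Fin.sum_univ_two, Matrix.transpose_apply, Matrix.vecHead, Matrix.vecTail] <;> ring
  have e5 : α 5 = !![2 * N - 2, 2 * N ^ 2 - 4 * N + 1;
      2 * N ^ 2 - 4 * N + 1, 2 * N ^ 3 - 6 * N ^ 2 + 4 * N] := by
    have h := hrec 3; norm_num [e3] at h; rw [h, hG]
    ext i j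
    fin_cases i <;> fin_cases j <;>
      simp [Matrix.mul_apply, Fin.sum_univ_two, Matrix.transpose_apply, Matrix.vecHead, Matrix.vecTail] <;> ring
  have base1 : α 1 + (N - 1) • α (1 + 2) = (N - 1) • α (1 + 1) + α (1 + 3) := by
    norm_num [h1, h2, e3, e4]
    and_intros <;> ring
  have base2 : α 2 + (N - 1) • α (2 + 2) = (N - 1) • α (2 + 1) + α (2 + 3) := by
    norm_num [h2, e3, e4, e5]
    and_intros <;> ring
  have base0 : α 0 + (N - 1) • α (0 + 2) = (N - 1) • α (0 + 1) + α (0 + 3) := by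
    apply step_down 0
    norm_num
    norm_num at base2
    exact base2
  have main : ∀ m : ℤ,
      (α m + (N - 1) • α (m + 2) = (N - 1) • α (m + 1) + α (m + 3)) ∧
      (α (m + 1) + (N - 1) • α (m + 1 + 2) = (N - 1) • α (m + 1 + 1) + α (m + 1 + 3)) := by
    intro m
    induction m using Int.induction_on with
    | zero => exact ⟨base0, by norm_num; norm_num at base1; exact base1⟩
    | succ i ih =>
        refine ⟨ih.2, ?_⟩
        have h := step_up i ih.1
        rw [show (i : ℤ) + 1 + 1 + 2 = i + 4 by ring, show (i : ℤ) + 1 + 1 + 1 = i + 3 by ring,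
          show (i : ℤ) + 1 + 1 + 3 = i + 5 by ring, show (i : ℤ) + 1 + 1 = i + 2 by ring]
        exact h
    | pred i ih =>
        constructor
        · apply step_down
          rw [show -(i : ℤ) - 1 + 2 = -i + 1 by ring, show -(i : ℤ) - 1 + 4 = -i + 1 + 2 by ring,
            show -(i : ℤ) - 1 + 3 = -i + 1 + 1 by ring, show -(i : ℤ) - 1 + 5 = -i + 1 + 3 by ring]
          exact ih.2
        · rw [show -(i : ℤ) - 1 + 1 + 2 = -i + 2 by ring,
            show -(i : ℤ) - 1 + 1 + 1 = -i + 1 by ring,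
            show -(i : ℤ) - 1 + 1 + 3 = -i + 3 by ring, show -(i : ℤ) - 1 + 1 = -i by ring]
          exact ih.1
  exact fun m => (main m).1
end

section
/- Let k ∈ ℤ and Λ̃ = aδ + bα₂ + cα₃ with δ = α₁ + α₂. Setting m = 4Nc + 2 and ℓ = 2c − 2b, the composite reflection satisfies (w₁·w₂)^k(ϱ^{(N)} + Λ̃) − (ϱ^{(N)} + Λ̃) = (mk² + (ℓ+1)k)δ − (km)α₂. -/
noncomputable section

/-- The bilinear form `⟨u,v⟩` (polarization of `⟨v,v⟩ = −2 det v`) on symmetric `2×2` real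
matrices. -/
def Bform (u v : Matrix (Fin 2) (Fin 2) ℝ) : ℝ :=
  2 * u 0 1 * v 0 1 - u 0 0 * v 1 1 - u 1 1 * v 0 0

def rootA1 : Matrix (Fin 2) (Fin 2) ℝ := !![2, 1; 1, 0]
def rootA2 : Matrix (Fin 2) (Fin 2) ℝ := !![0, -1; -1, 0]
def rootA3 (N : ℕ) : Matrix (Fin 2) (Fin 2) ℝ := !![0, 1; 1, 2*(N:ℝ)]
def weylRho (N : ℕ) : Matrix (Fin 2) (Fin 2) ℝ := !![1/(N:ℝ), 1/2; 1/2, 1]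

/-- The Weyl reflection in the root `α` (of norm 2). -/
def weylRefl (α β : Matrix (Fin 2) (Fin 2) ℝ) : Matrix (Fin 2) (Fin 2) ℝ :=
  β - Bform α β • α

/-- For `Λ̃ = aδ + bα₂ + cα₃`, `m = 4Nc + 2`, `ℓ = 2c − 2b`, and each `k : ℤ`,
`(w₁·w₂)^k (ϱ + Λ̃) − (ϱ + Λ̃) = (mk² + (ℓ+1)k) δ − (km) α₂`. -/
theorem stmt15 (N : ℕ) (hN : 0 < N) (a b c : ℝ) (k : ℤ)
    (W : Matrix (Fin 2) (Fin 2) ℝ ≃ₗ[ℝ] Matrix (Fin 2) (Fin 2) ℝ)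
    (hW : ∀ β, W β = weylRefl rootA1 (weylRefl rootA2 β)) :
    let δ := rootA1 + rootA2
    let Λ := a • δ + b • rootA2 + c • rootA3 N
    let m : ℝ := 4*(N:ℝ)*c + 2
    let ℓ : ℝ := 2*c - 2*b
    (W ^ k) (weylRho N + Λ) - (weylRho N + Λ) =
      (m*(k:ℝ)^2 + (ℓ + 1)*(k:ℝ)) • δ - ((k:ℝ)*m) • rootA2 := by
  intro δ Λ m ℓ
  set v : Matrix (Fin 2) (Fin 2) ℝ := weylRho N + Λ with hv
  -- explicit action of W
  have hstep : ∀ β : Matrix (Fin 2) (Fin 2) ℝ,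
      W β = β + (2*β 0 1 + 2*β 1 1) • δ - (2*β 1 1) • rootA2 := by
    intro β
    rw [hW]
    show weylRefl rootA1 (weylRefl rootA2 β) = _
    ext i j
    fin_cases i <;> fin_cases j <;>
      simp [weylRefl, Bform, rootA1, rootA2, δ, Matrix.add_apply, Matrix.sub_apply,
        Matrix.smul_apply, Matrix.cons_val_zero, Matrix.cons_val_one] <;> ring
  have hδ01 : δ 0 1 = 0 := by simp [δ, rootA1, rootA2]
  have hδ11 : δ 1 1 = 0 := by simp [δ, rootA1, rootA2]
  have hα01 : rootA2 0 1 = -1 := by simp [rootA2]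
  have hα11 : rootA2 1 1 = 0 := by simp [rootA2]
  have hv01 : v 0 1 = c - b + 1/2 := by
    simp [hv, Λ, δ, weylRho, rootA1, rootA2, rootA3, Matrix.add_apply, Matrix.smul_apply]
    ring
  have hv11 : v 1 1 = 2*(N:ℝ)*c + 1 := by
    simp [hv, Λ, δ, weylRho, rootA1, rootA2, rootA3, Matrix.add_apply, Matrix.smul_apply]
    ring
  -- action of W on v + X•δ - Y•α₂
  have hstep2 : ∀ X Y : ℝ, W (v + X • δ - Y • rootA2)
      = v + (X + 2*Y + ℓ + 1 + m) • δ - (Y + m) • rootA2 := by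
    intro X Y
    rw [hstep]
    have e01 : (v + X • δ - Y • rootA2) 0 1 = v 0 1 + Y := by
      simp [Matrix.add_apply, Matrix.sub_apply, Matrix.smul_apply, hδ01, hα01]
    have e11 : (v + X • δ - Y • rootA2) 1 1 = v 1 1 := by
      simp [Matrix.add_apply, Matrix.sub_apply, Matrix.smul_apply, hδ11, hα11]
    rw [e01, e11, hv01, hv11]
    module
  have key : ∀ n : ℤ, (W ^ n) v =
      v + (m*(n:ℝ)^2 + (ℓ + 1)*(n:ℝ)) • δ - ((n:ℝ)*m) • rootA2 := by
    intro n
    induction n using Int.induction_on with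
    | zero => simp
    | succ n ih =>
        have hpow : (W ^ ((n:ℤ)+1)) v = W ((W ^ (n:ℤ)) v) := by
          rw [show ((n:ℤ)+1) = 1 + (n:ℤ) by ring, zpow_add, zpow_one]; rfl
        rw [hpow, ih, hstep2]
        push_cast
        module
    | pred n ih =>
        have hpow : (W ^ (-(n:ℤ)-1)) v = W⁻¹ ((W ^ (-(n:ℤ))) v) := by
          rw [show (-(n:ℤ)-1) = (-1) + (-(n:ℤ)) by ring, zpow_add, zpow_neg_one]; rfl
        have hprev : W (v + (m*((-(n:ℝ))-1)^2 + (ℓ + 1)*((-(n:ℝ))-1)) • δ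
            - (((-(n:ℝ))-1)*m) • rootA2) = (W ^ (-(n:ℤ))) v := by
          rw [ih, hstep2]
          push_cast
          module
        have hc : ∀ x : Matrix (Fin 2) (Fin 2) ℝ, W⁻¹ (W x) = x := fun x =>
          W.symm_apply_apply x
        rw [hpow, ← hprev, hc]
        push_cast
        module
  rw [key k]
  abel
end
end
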